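/- Let (E_t, β_{s,t})_{s,t∈ℚ_{>0}} be a rational-time subproduct system of two-dimensional Hilbert spaces with vectors x_t, y_t ∈ E_t satisfying Condition (3): there are c ∈ (0,∞) and complex numbers η_t with |η_t|=1, η_{s+t}=η_s·η_t, such that ‖x_t‖=1, ⟨x_t,y_t⟩=0, ‖y_t‖² = t if c=1 and ‖y_t‖² = (c^{2t}−1)/(c²−1) if c≠1, β_{s,t}(x_{s+t})=x_s⊗x_t, β_{s,t}(y_{s+t})=y_s⊗x_t + c^s η_s x_s⊗y_t for all s,t ∈ ℚ_{>0}. If the function on ℚ ∩ [0,1] equal to ⟨β_{t,1−t}(y_1), ξ_{1−t,t}(β_{1−t,t}(y_1))⟩ for t ∈ ℚ ∩ (0,1) and equal to ‖y_1‖² = 1 at t ∈ {0,1} is uniformly continuous, then there exists b ∈ ℝ such that η_t = e^{ibt} for all t ∈ ℚ_{>0}. -/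

import Mathlib

noncomputable section

open scoped TensorProduct ComplexConjugate

namespace SubprodHilbert

section TensorConstruction


variable {E F : Type*} [NormedAddCommGroup E] [InnerProductSpace ℂ E]
  [NormedAddCommGroup F] [InnerProductSpace ℂ F]

local notation "⟪" x ", " y "⟫" => @inner ℂ _ _ x y

/-- For fixed `u, v`, the ℂ-bilinear functional `(u', v') ↦ ⟪u,u'⟫ ⟪v,v'⟫`. -/
def innerAux (u : E) (v : F) : E →ₗ[ℂ] F →ₗ[ℂ] ℂ :=
  LinearMap.mk₂ ℂ (fun u' v' => ⟪u, u'⟫ * ⟪v, v'⟫)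
    (fun m₁ m₂ n => by simp [inner_add_right]; ring)
    (fun c m n => by simp [inner_smul_right]; ring)
    (fun m n₁ n₂ => by simp [inner_add_right]; ring)
    (fun c m n => by simp [inner_smul_right]; ring)

@[simp] lemma innerAux_apply (u u' : E) (v v' : F) :
    innerAux u v u' v' = ⟪u, u'⟫ * ⟪v, v'⟫ := rfl

/-- The (conjugate-linear-in-the-first-variable) map sending `z : E ⊗ F` to the linear
functional `w ↦ ⟪z, w⟫`. -/
def innerFunc : E ⊗[ℂ] F →+ (E ⊗[ℂ] F →ₗ[ℂ] ℂ) :=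
  TensorProduct.liftAddHom
    (AddMonoidHom.mk'
      (fun u => AddMonoidHom.mk' (fun v => TensorProduct.lift (innerAux u v))
        (fun v₁ v₂ => by
          apply TensorProduct.ext'
          intro u' v'
          simp [inner_add_left]
          ring))
      (fun u₁ u₂ => by
        ext v : 1
        apply TensorProduct.ext'
        intro u' v'
        simp [inner_add_left]
        ring))
    (fun c u v => by
      apply TensorProduct.ext'
      intro u' v'
      simp [inner_smul_left]
      ring)

@[simp] lemma innerFunc_tmul (u u' : E) (v v' : F) :
    innerFunc (u ⊗ₜ[ℂ] v) (u' ⊗ₜ[ℂ] v') = ⟪u, u'⟫ * ⟪v, v'⟫ := rfl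

lemma innerFunc_smul (c : ℂ) (z : E ⊗[ℂ] F) :
    innerFunc (c • z) = conj c • innerFunc z := by
  induction z using TensorProduct.induction_on with
  | zero => simp
  | tmul u v =>
      rw [TensorProduct.smul_tmul']
      apply TensorProduct.ext'
      intro u' v'
      simp [inner_smul_left]
      ring
  | add z₁ z₂ h₁ h₂ => rw [smul_add, map_add, map_add, h₁, h₂, smul_add]

lemma innerFunc_conj_symm (z w : E ⊗[ℂ] F) :
    conj (innerFunc w z) = innerFunc z w := by
  induction z using TensorProduct.induction_on with
  | zero => simp
  | tmul u v =>
      induction w using TensorProduct.induction_on with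
      | zero => simp
      | tmul u' v' =>
          simp only [innerFunc_tmul, map_mul, inner_conj_symm]
      | add w₁ w₂ h₁ h₂ => simp [map_add, h₁, h₂]
  | add z₁ z₂ h₁ h₂ => simp [map_add, h₁, h₂]

lemma exists_orthonormal_rep (z : E ⊗[ℂ] F) :
    ∃ (n : ℕ) (e : Fin n → E) (w : Fin n → F),
      Orthonormal ℂ e ∧ z = ∑ i, e i ⊗ₜ[ℂ] w i := by
  obtain ⟨S, rfl⟩ := TensorProduct.exists_finset z
  set U : Submodule ℂ E := Submodule.span ℂ (Prod.fst '' (S : Set (E × F))) with hU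
  haveI : FiniteDimensional ℂ U :=
    FiniteDimensional.span_of_finite ℂ (S.finite_toSet.image _)
  let b : OrthonormalBasis (Fin (Module.finrank ℂ U)) ℂ U := stdOrthonormalBasis ℂ U
  have hone : Orthonormal ℂ (fun i => (b i : E)) := by
    have hb := b.orthonormal
    constructor
    · intro i; simpa [norm] using hb.1 i
    · intro i j hij; simpa [Submodule.coe_inner] using hb.2 hij
  refine ⟨_, fun i => (b i : E), fun i => ∑ p ∈ S, ⟪(b i : E), p.1⟫ • p.2, hone, ?_⟩
  have key : ∀ p ∈ S, p.1 ⊗ₜ[ℂ] p.2 = ∑ i, ⟪(b i : E), p.1⟫ • ((b i : E) ⊗ₜ[ℂ] p.2) := by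
    intro p hp
    have hmem : p.1 ∈ U := Submodule.subset_span ⟨p, hp, rfl⟩
    have hrep : ((∑ i, (⟪b i, (⟨p.1, hmem⟩ : U)⟫ : ℂ) • b i : U) : E) = p.1 := by
      rw [b.sum_repr' ⟨p.1, hmem⟩]
    have h2 : ∀ i, (⟪b i, (⟨p.1, hmem⟩ : U)⟫ : ℂ) = ⟪(b i : E), p.1⟫ := fun i =>
      Submodule.coe_inner U (b i) ⟨p.1, hmem⟩
    have hrep' : p.1 = ∑ i, ⟪(b i : E), p.1⟫ • (b i : E) := by
      calc p.1 = ((∑ i, (⟪b i, (⟨p.1, hmem⟩ : U)⟫ : ℂ) • b i : U) : E) := hrep.symm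
        _ = ∑ i, (⟪b i, (⟨p.1, hmem⟩ : U)⟫ : ℂ) • (b i : E) := by push_cast; rfl
        _ = ∑ i, ⟪(b i : E), p.1⟫ • (b i : E) := Finset.sum_congr rfl fun i _ => by rw [h2]
    calc p.1 ⊗ₜ[ℂ] p.2 = (∑ i, ⟪(b i : E), p.1⟫ • (b i : E)) ⊗ₜ[ℂ] p.2 := by rw [← hrep']
      _ = ∑ i, ⟪(b i : E), p.1⟫ • ((b i : E) ⊗ₜ[ℂ] p.2) := by
          rw [TensorProduct.sum_tmul]
          refine Finset.sum_congr rfl fun i _ => ?_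
          rw [TensorProduct.smul_tmul']
  calc ∑ p ∈ S, p.1 ⊗ₜ[ℂ] p.2
      = ∑ p ∈ S, ∑ i, ⟪(b i : E), p.1⟫ • ((b i : E) ⊗ₜ[ℂ] p.2) :=
        Finset.sum_congr rfl key
    _ = ∑ i, ∑ p ∈ S, ⟪(b i : E), p.1⟫ • ((b i : E) ⊗ₜ[ℂ] p.2) := Finset.sum_comm
    _ = ∑ i, (b i : E) ⊗ₜ[ℂ] (∑ p ∈ S, ⟪(b i : E), p.1⟫ • p.2) := by
        refine Finset.sum_congr rfl fun i _ => ?_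
        rw [TensorProduct.tmul_sum]
        refine Finset.sum_congr rfl fun p _ => ?_
        rw [TensorProduct.tmul_smul]

lemma innerFunc_self (n : ℕ) (e : Fin n → E) (w : Fin n → F) (he : Orthonormal ℂ e) :
    innerFunc (∑ i, e i ⊗ₜ[ℂ] w i) (∑ i, e i ⊗ₜ[ℂ] w i) = ∑ i, ⟪w i, w i⟫ := by
  have hee : ∀ i j, (⟪e i, e j⟫ : ℂ) = if i = j then 1 else 0 := orthonormal_iff_ite.mp he
  simp only [map_sum, LinearMap.sum_apply, Finset.sum_apply, innerFunc_tmul, hee, ite_mul,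
    one_mul, zero_mul]
  rw [Finset.sum_comm]
  simp

/-- The inner-product-space core on the algebraic tensor product of two complex
inner product spaces, determined by `⟪u ⊗ v, u' ⊗ v'⟫ = ⟪u,u'⟫ ⟪v,v'⟫`. -/
def tensorCore : InnerProductSpace.Core ℂ (E ⊗[ℂ] F) where
  inner z w := innerFunc z w
  conj_inner_symm := innerFunc_conj_symm
  re_inner_nonneg z := by
    show 0 ≤ RCLike.re (innerFunc z z)
    obtain ⟨n, e, w, he, rfl⟩ := exists_orthonormal_rep z
    rw [innerFunc_self n e w he]
    rw [map_sum]
    exact Finset.sum_nonneg fun i _ => inner_self_nonneg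
  add_left z₁ z₂ w := by
    show innerFunc (z₁ + z₂) w = innerFunc z₁ w + innerFunc z₂ w
    rw [map_add]; rfl
  smul_left z w c := by
    show innerFunc (c • z) w = conj c * innerFunc z w
    rw [innerFunc_smul]; rfl
  definite z hz := by
    replace hz : innerFunc z z = 0 := hz
    obtain ⟨n, e, w, he, rfl⟩ := exists_orthonormal_rep z
    rw [innerFunc_self n e w he] at hz
    have hz' : ∑ i, (‖w i‖ ^ 2 : ℝ) = 0 := by
      have := congrArg Complex.re hz
      simpa [← @inner_self_eq_norm_sq ℂ] using this
    have hw : ∀ i ∈ Finset.univ, w i = 0 := by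
      intro i hi
      have h0 : (‖w i‖ ^ 2 : ℝ) = 0 :=
        (Finset.sum_eq_zero_iff_of_nonneg fun j _ => sq_nonneg _).mp hz' i hi
      simpa using h0
    calc ∑ i, e i ⊗ₜ[ℂ] w i = ∑ i : Fin n, (0 : E ⊗[ℂ] F) :=
          Finset.sum_congr rfl fun i hi => by rw [hw i hi, TensorProduct.tmul_zero]
      _ = 0 := Finset.sum_const_zero

instance tensorNormedAddCommGroup : NormedAddCommGroup (E ⊗[ℂ] F) :=
  @InnerProductSpace.Core.toNormedAddCommGroup ℂ _ _ _ _ tensorCore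

instance tensorInnerProductSpace : InnerProductSpace ℂ (E ⊗[ℂ] F) :=
  InnerProductSpace.ofCore tensorCore.toCore

@[simp] lemma inner_tmul (u u' : E) (v v' : F) :
    (inner ℂ (u ⊗ₜ[ℂ] v) (u' ⊗ₜ[ℂ] v') : ℂ) = ⟪u, u'⟫ * ⟪v, v'⟫ := rfl
end TensorConstruction


/-- Cast between the fibers of a family of inner product spaces along an equality of
indices, as a linear isometric isomorphism. -/
def castE {ι : Type*} (E : ι → Type*) [∀ t, NormedAddCommGroup (E t)]
    [∀ t, InnerProductSpace ℂ (E t)] {a b : ι} (h : a = b) : E a ≃ₗᵢ[ℂ] E b := by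
  subst h; exact LinearIsometryEquiv.refl ℂ (E a)


/-- The positive rationals, the time domain of a rational-time subproduct system. -/
abbrev Qpos : Type := {q : ℚ // 0 < q}

section Rational

variable (E : Qpos → Type*)
  [∀ t, NormedAddCommGroup (E t)] [∀ t, InnerProductSpace ℂ (E t)]
variable (β : ∀ s t : Qpos, E (s + t) →ₗᵢ[ℂ] (E s ⊗[ℂ] E t))

/-- The associativity condition in the definition of a rational-time subproduct system. -/
def SubprodAssocQ : Prop :=
  ∀ r s t : Qpos, ∀ u : E (r + s + t),
    (TensorProduct.assoc ℂ (E r) (E s) (E t))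
      (TensorProduct.map (β r s).toLinearMap LinearMap.id (β (r + s) t u))
    = TensorProduct.map LinearMap.id (β s t).toLinearMap
        (β r (s + t) (castE E (add_assoc r s t) u))

/-- Condition (1) of Theorem 3.1, with the parameter `a` explicit:
`(x, y)` behaves like two exponential units at angle `aᵗ`. -/
def Cond1With (a : ℝ) (x y : ∀ t : Qpos, E t) : Prop :=
  (∀ t, ‖x t‖ = 1) ∧ (∀ t, ‖y t‖ = 1) ∧
  (∀ t : Qpos, (inner ℂ (x t) (y t) : ℂ) = ((a ^ ((t : ℚ) : ℝ) : ℝ) : ℂ)) ∧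
  (∀ s t : Qpos, β s t (x (s + t)) = x s ⊗ₜ[ℂ] x t) ∧
  (∀ s t : Qpos, β s t (y (s + t)) = y s ⊗ₜ[ℂ] y t)

/-- Condition (1) of Theorem 3.1: `∃ a ∈ [0,1)` as in `Cond1With`. -/
def Cond1 (x y : ∀ t : Qpos, E t) : Prop :=
  ∃ a : ℝ, 0 ≤ a ∧ a < 1 ∧ Cond1With E β a x y

/-- Condition (3) of Theorem 3.1, with the parameter `c` and the multiplicative
unimodular family `η` explicit. -/
def Cond3With (c : ℝ) (η : Qpos → ℂ) (x y : ∀ t : Qpos, E t) : Prop :=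
  (∀ t, ‖η t‖ = 1) ∧ (∀ s t : Qpos, η (s + t) = η s * η t) ∧
  (∀ t, ‖x t‖ = 1) ∧ (∀ t : Qpos, (inner ℂ (x t) (y t) : ℂ) = 0) ∧
  (∀ t : Qpos, ‖y t‖ ^ 2 =
    if c = 1 then ((t : ℚ) : ℝ) else (c ^ (2 * ((t : ℚ) : ℝ)) - 1) / (c ^ 2 - 1)) ∧
  (∀ s t : Qpos, β s t (x (s + t)) = x s ⊗ₜ[ℂ] x t) ∧
  (∀ s t : Qpos, β s t (y (s + t)) =
    y s ⊗ₜ[ℂ] x t + (((c ^ ((s : ℚ) : ℝ) : ℝ) : ℂ) * η s) • (x s ⊗ₜ[ℂ] y t))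

/-- Condition (3) of Theorem 3.1. -/
def Cond3 (x y : ∀ t : Qpos, E t) : Prop :=
  ∃ c : ℝ, 0 < c ∧ ∃ η : Qpos → ℂ, Cond3With E β c η x y

/-- Condition (4) of Theorem 3.1. -/
def Cond4 (x y : ∀ t : Qpos, E t) : Prop :=
  (∀ t, ‖x t‖ = 1) ∧ (∀ t, ‖y t‖ = 1) ∧
  (∀ t : Qpos, (inner ℂ (x t) (y t) : ℂ) = 0) ∧
  (∀ s t : Qpos, β s t (x (s + t)) = x s ⊗ₜ[ℂ] x t) ∧
  (∀ s t : Qpos, β s t (y (s + t)) = y s ⊗ₜ[ℂ] x t)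

/-- Condition (5) of Theorem 3.1. -/
def Cond5 (x y : ∀ t : Qpos, E t) : Prop :=
  (∀ t, ‖x t‖ = 1) ∧ (∀ t, ‖y t‖ = 1) ∧
  (∀ t : Qpos, (inner ℂ (x t) (y t) : ℂ) = 0) ∧
  (∀ s t : Qpos, β s t (x (s + t)) = x s ⊗ₜ[ℂ] x t) ∧
  (∀ s t : Qpos, β s t (y (s + t)) = x s ⊗ₜ[ℂ] y t)

/-- The function `t ↦ ⟨β_{t,1-t} h, ξ_{1-t,t} β_{1-t,t} h⟩` on `ℚ ∩ (0,1)` (written here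
with the two arguments of the inner product exchanged, to match the convention of Mathlib's
`inner`, which is conjugate-linear in its first argument), extended by `‖h‖²` elsewhere. -/
def flipInnerFn (h : E 1) : ℚ → ℂ := fun t =>
  if ht : 0 < t ∧ t < 1 then
    (inner ℂ
      ((TensorProduct.comm ℂ (E ⟨1 - t, by linarith [ht.2]⟩) (E ⟨t, ht.1⟩))
        (β ⟨1 - t, by linarith [ht.2]⟩ ⟨t, ht.1⟩
          (castE E (by apply Subtype.ext; simp) h)))
      (β ⟨t, ht.1⟩ ⟨1 - t, by linarith [ht.2]⟩
        (castE E (by apply Subtype.ext; simp) h)) : ℂ)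
  else ((‖h‖ : ℂ)) ^ 2

end Rational



section TensorInnerAux

variable {E F : Type*} [NormedAddCommGroup E] [InnerProductSpace ℂ E]
  [NormedAddCommGroup F] [InnerProductSpace ℂ F]

lemma tinner_add_left (a b w : E ⊗[ℂ] F) :
    (inner ℂ (a + b) w : ℂ) = inner ℂ a w + inner ℂ b w := by
  letI : NormedAddCommGroup (E ⊗[ℂ] F) := TensorProduct.instNormedAddCommGroup
  letI : InnerProductSpace ℂ (E ⊗[ℂ] F) := TensorProduct.instInnerProductSpace
  exact inner_add_left a b w

lemma tinner_add_right (a v w : E ⊗[ℂ] F) :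
    (inner ℂ a (v + w) : ℂ) = inner ℂ a v + inner ℂ a w := by
  letI : NormedAddCommGroup (E ⊗[ℂ] F) := TensorProduct.instNormedAddCommGroup
  letI : InnerProductSpace ℂ (E ⊗[ℂ] F) := TensorProduct.instInnerProductSpace
  exact inner_add_right a v w

lemma tinner_smul_left (r : ℂ) (a w : E ⊗[ℂ] F) :
    (inner ℂ (r • a) w : ℂ) = conj r * inner ℂ a w := by
  letI : NormedAddCommGroup (E ⊗[ℂ] F) := TensorProduct.instNormedAddCommGroup
  letI : InnerProductSpace ℂ (E ⊗[ℂ] F) := TensorProduct.instInnerProductSpace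
  exact inner_smul_left a w r

lemma tinner_smul_right (r : ℂ) (a w : E ⊗[ℂ] F) :
    (inner ℂ a (r • w) : ℂ) = r * inner ℂ a w := by
  letI : NormedAddCommGroup (E ⊗[ℂ] F) := TensorProduct.instNormedAddCommGroup
  letI : InnerProductSpace ℂ (E ⊗[ℂ] F) := TensorProduct.instInnerProductSpace
  exact inner_smul_right a w r

end TensorInnerAux

section CharAux
open Complex Real

lemma castE_family {ι : Type*} (E : ι → Type*) [∀ t, NormedAddCommGroup (E t)]
    [∀ t, InnerProductSpace ℂ (E t)] (y : ∀ t, E t) {a b : ι} (h : a = b) :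
    castE E h (y a) = y b := by subst h; rfl


theorem arg_exp_unit (θ : ℝ) (h : θ ∈ Set.Ioc (-Real.pi) Real.pi) :
    (Complex.exp (θ * I)).arg = θ := by
  rw [Complex.exp_mul_I]
  exact Complex.arg_cos_add_sin_mul_I h

theorem arg_mul_unit {z w : ℂ} (hz : ‖z‖ = 1) (hw : ‖w‖ = 1)
    (h : |z.arg + w.arg| < Real.pi) : (z * w).arg = z.arg + w.arg := by
  have hz' : z = Complex.exp (z.arg * I) := by
    conv_lhs => rw [← Complex.norm_mul_exp_arg_mul_I z]
    rw [hz]; simp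
  have hw' : w = Complex.exp (w.arg * I) := by
    conv_lhs => rw [← Complex.norm_mul_exp_arg_mul_I w]
    rw [hw]; simp
  have hmul : z * w = Complex.exp ((z.arg + w.arg : ℝ) * I) := by
    nth_rewrite 1 [hz']
    nth_rewrite 1 [hw']
    rw [← Complex.exp_add]
    push_cast; ring_nf
  rw [hmul, arg_exp_unit]
  rw [abs_lt] at h
  exact ⟨by linarith, le_of_lt h.2⟩

theorem eta_pow (η : Qpos → ℂ) (hmul : ∀ s t : Qpos, η (s+t) = η s * η t)
    (n : ℕ) (t : Qpos) (h : (0:ℚ) < ((n:ℚ)+1) * t) :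
    η ⟨((n:ℚ)+1) * t, h⟩ = η t ^ (n+1) := by
  induction n with
  | zero => simp
  | succ n ih =>
      have h' : (0:ℚ) < ((n:ℚ)+1) * t := mul_pos (by positivity) t.2
      have he : (⟨((n:ℚ)+1+1) * t, by push_cast at h ⊢; linarith⟩ : Qpos)
          = (⟨((n:ℚ)+1)*t, h'⟩ : Qpos) + t := by
        ext; show ((n:ℚ)+1+1)*t = ((n:ℚ)+1)*t + t; ring
      have hcast : (((n+1:ℕ):ℚ)+1) = ((n:ℚ)+1+1) := by push_cast; ring
      have : (⟨(((n+1:ℕ):ℚ)+1) * t, h⟩ : Qpos) = ⟨((n:ℚ)+1+1) * t, by push_cast at h ⊢; linarith⟩ := by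
        ext; show (((n+1:ℕ):ℚ)+1) * t = ((n:ℚ)+1+1)*t; rw [hcast]
      rw [this, he, hmul, ih h']
      ring

theorem char_exp (η : Qpos → ℂ)
    (habs : ∀ t, ‖η t‖ = 1)
    (hmul : ∀ s t : Qpos, η (s+t) = η s * η t)
    (δ : ℚ) (hδ : 0 < δ)
    (hsmall : ∀ t : Qpos, (t:ℚ) ≤ δ → ‖η t - 1‖ < 1) :
    ∃ b : ℝ, ∀ t : Qpos, η t = Complex.exp (Complex.I * (b:ℂ) * (((t:ℚ):ℝ):ℂ)) := by
  have hne : ∀ t : Qpos, η t ≠ 0 := by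
    intro t h0
    have := habs t; rw [h0] at this; simp at this
  -- positive real part on small times
  have hre : ∀ t : Qpos, (t:ℚ) ≤ δ → 0 < (η t).re := by
    intro t ht
    have h1 := hsmall t ht
    have h2 : Complex.normSq (η t - 1) < 1 := by
      have := Complex.sq_norm (η t - 1)
      nlinarith [norm_nonneg (η t - 1)]
    have h3 : Complex.normSq (η t) = 1 := by
      rw [Complex.normSq_eq_norm_sq, habs t]; norm_num
    have h4 : Complex.normSq (η t - 1) = Complex.normSq (η t) - 2 * (η t).re + 1 := by
      simp [Complex.normSq_apply, Complex.sub_re, Complex.sub_im]; ring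
    rw [h4, h3] at h2; linarith
  have harg : ∀ t : Qpos, (t:ℚ) ≤ δ → |(η t).arg| < Real.pi / 2 := by
    intro t ht
    exact Complex.abs_arg_lt_pi_div_two_iff.mpr (Or.inl (hre t ht))
  -- additivity of arg on small times
  have hadd : ∀ s t : Qpos, ((s+t : Qpos):ℚ) ≤ δ → (η (s+t)).arg = (η s).arg + (η t).arg := by
    intro s t hst
    have hco : ((s+t : Qpos):ℚ) = (s:ℚ) + (t:ℚ) := rfl
    have hs : (s:ℚ) ≤ δ := by rw [hco] at hst; linarith [t.2]
    have ht : (t:ℚ) ≤ δ := by rw [hco] at hst; linarith [s.2]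
    rw [hmul]
    refine arg_mul_unit (habs s) (habs t) ?_
    have := harg s hs; have := harg t ht
    calc |(η s).arg + (η t).arg| ≤ |(η s).arg| + |(η t).arg| := abs_add_le _ _
      _ < Real.pi/2 + Real.pi/2 := by linarith
      _ = Real.pi := by ring
  -- linearity of arg
  have hlin : ∀ (n : ℕ) (t : Qpos) (h : (0:ℚ) < ((n:ℚ)+1) * t),
      ((n:ℚ)+1) * (t:ℚ) ≤ δ → (η ⟨((n:ℚ)+1)*t, h⟩).arg = ((n:ℝ)+1) * (η t).arg := by
    intro n
    induction n with
    | zero =>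
        intro t h hle
        have he : (⟨(((0:ℕ):ℚ)+1) * t, h⟩ : Qpos) = t := by
          ext; show (((0:ℕ):ℚ)+1)*(t:ℚ) = (t:ℚ); push_cast; ring
        rw [he]; push_cast; ring
    | succ n ih =>
        intro t h hle
        have ht : (0:ℚ) < (t:ℚ) := t.2
        have h' : (0:ℚ) < ((n:ℚ)+1) * t := mul_pos (by positivity) t.2
        have hle' : ((n:ℚ)+1) * (t:ℚ) ≤ δ := by
          push_cast at hle; nlinarith
        have he : (⟨(((n+1:ℕ):ℚ)+1) * t, h⟩ : Qpos)
            = (⟨((n:ℚ)+1)*t, h'⟩ : Qpos) + t := by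
          ext; show (((n+1:ℕ):ℚ)+1)*t = ((n:ℚ)+1)*t + t; push_cast; ring
        rw [he, hadd _ _ (by rw [show (((⟨((n:ℚ)+1)*t, h'⟩ : Qpos) + t : Qpos) : ℚ) = ((n:ℚ)+1)*t + t from rfl]; push_cast at hle; nlinarith), ih t h' hle']
        push_cast; ring
  -- the sequence of reciprocal times
  have qpos : ∀ n : ℕ, (0:ℚ) < 1/((n:ℚ)+1) := by intro n; positivity
  set q : ℕ → Qpos := fun n => ⟨1/((n:ℚ)+1), qpos n⟩ with hq
  -- coherence
  have hcoh : ∀ n m : ℕ, (q n : ℚ) ≤ δ → (q m : ℚ) ≤ δ →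
      ((n:ℝ)+1) * (η (q n)).arg = ((m:ℝ)+1) * (η (q m)).arg := by
    have key : ∀ n m : ℕ, (q n : ℚ) ≤ δ →
        (η (q n)).arg = ((m:ℝ)+1) * (η (q ((n+1)*(m+1)-1))).arg := by
      intro n m hn
      have hidx : (((n+1)*(m+1)-1 : ℕ) : ℚ) + 1 = ((n:ℚ)+1)*((m:ℚ)+1) := by
        have : (n+1)*(m+1)-1+1 = (n+1)*(m+1) := Nat.sub_add_cancel (Nat.mul_pos n.succ_pos m.succ_pos)
        rw [show ((((n+1)*(m+1)-1 : ℕ)):ℚ) + 1 = ((((n+1)*(m+1)-1+1 : ℕ)):ℚ) by push_cast; ring, this]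
        push_cast; ring
      have hval : (q ((n+1)*(m+1)-1) : ℚ) = 1/(((n:ℚ)+1)*((m:ℚ)+1)) := by
        show 1/((((n+1)*(m+1)-1:ℕ):ℚ)+1) = _
        rw [hidx]
      have h0 : (0:ℚ) < ((m:ℚ)+1) * (q ((n+1)*(m+1)-1) : ℚ) :=
        mul_pos (by positivity) (q _).2
      have heq : (q n) = ⟨((m:ℚ)+1) * (q ((n+1)*(m+1)-1) : ℚ), h0⟩ := by
        ext
        show 1/((n:ℚ)+1) = ((m:ℚ)+1) * (q ((n+1)*(m+1)-1) : ℚ)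
        rw [hval]; field_simp
      have hle2 : ((m:ℚ)+1) * (q ((n+1)*(m+1)-1) : ℚ) ≤ δ := by
        rw [hval]
        calc ((m:ℚ)+1) * (1/(((n:ℚ)+1)*((m:ℚ)+1))) = 1/((n:ℚ)+1) := by field_simp
          _ ≤ δ := hn
      rw [heq, hlin m _ h0 hle2]
    intro n m hn hm
    have h1 := key n m hn
    have h2 := key m n hm
    have hsym : (m+1)*(n+1)-1 = (n+1)*(m+1)-1 := by ring_nf
    rw [hsym] at h2
    rw [h1, h2]; ring
  -- choose N₀
  obtain ⟨N₀, hN₀⟩ := exists_nat_gt (1/δ)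
  have hN₀le : (q N₀ : ℚ) ≤ δ := by
    show 1/((N₀:ℚ)+1) ≤ δ
    rw [div_le_iff₀ (by positivity)]
    have h1 : 1/δ * δ = 1 := by field_simp
    nlinarith [hN₀, hδ]
  refine ⟨((N₀:ℝ)+1) * (η (q N₀)).arg, ?_⟩
  intro t
  -- decompose t
  set d : ℕ := t.1.den with hd
  have hdpos : 0 < d := t.1.den_pos
  have hnum : 0 < t.1.num := Rat.num_pos.mpr t.2
  set p : ℕ := t.1.num.toNat * (N₀+1) with hp
  set K : ℕ := d * (N₀+1) with hK
  have hKpos : 0 < K := by positivity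
  have hppos : 0 < p := by
    have : 0 < t.1.num.toNat := by omega
    positivity
  obtain ⟨p', hp'⟩ : ∃ p', p = p' + 1 := ⟨p - 1, by omega⟩
  obtain ⟨K', hK'⟩ : ∃ K', K = K' + 1 := ⟨K - 1, by omega⟩
  -- t = (p'+1) * q K'
  have hqK : (q K' : ℚ) = 1/(K:ℚ) := by
    show 1/((K':ℚ)+1) = 1/(K:ℚ)
    rw [show ((K':ℚ)+1) = ((K'+1:ℕ):ℚ) by push_cast; ring, ← hK']
  have htval : (t:ℚ) = ((p':ℚ)+1) * (q K' : ℚ) := by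
    rw [hqK]
    have h1 : ((p':ℚ)+1) = (p:ℚ) := by rw [hp']; push_cast; ring
    rw [h1]
    have hnt : ((p:ℕ):ℚ) = (t.1.num : ℚ) * ((N₀:ℚ)+1) := by
      rw [hp]
      have : ((t.1.num.toNat : ℤ):ℚ) = (t.1.num : ℚ) := by congr 1; omega
      push_cast
      rw [show ((t.1.num.toNat:ℚ)) = ((t.1.num:ℚ)) by exact_mod_cast this]
    have hKq : ((K:ℕ):ℚ) = (d:ℚ) * ((N₀:ℚ)+1) := by rw [hK]; push_cast; ring
    have hden : (t:ℚ) = (t.1.num:ℚ)/(d:ℚ) := (Rat.num_div_den (t:ℚ)).symm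
    have hd0 : ((d:ℕ):ℚ) ≠ 0 := by positivity
    have hmd : (t:ℚ) * (d:ℚ) = (t.1.num:ℚ) := by
      conv_lhs => rw [← Rat.num_div_den (t:ℚ)]
      rw [div_mul_cancel₀ _ hd0]
    rw [hnt, hKq]
    have hd0' : (d:ℚ) * ((N₀:ℚ)+1) ≠ 0 := by positivity
    rw [mul_one_div, eq_div_iff hd0']
    linear_combination ((N₀:ℚ)+1) * hmd
  have h0t : (0:ℚ) < ((p':ℚ)+1) * (q K' : ℚ) := mul_pos (by positivity) (q K').2
  have hteq : t = ⟨((p':ℚ)+1) * (q K' : ℚ), h0t⟩ := by ext; exact htval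
  have hqKle : (q K' : ℚ) ≤ δ := by
    rw [hqK]
    calc 1/(K:ℚ) ≤ 1/((N₀:ℚ)+1) := by
          apply div_le_div_of_nonneg_left (by norm_num) (by positivity)
          rw [hK]; push_cast
          have : (1:ℚ) ≤ (d:ℚ) := by exact_mod_cast hdpos
          nlinarith
      _ ≤ δ := hN₀le
  -- arg of q K'
  have hargK : ((K':ℝ)+1) * (η (q K')).arg = ((N₀:ℝ)+1) * (η (q N₀)).arg :=
    hcoh K' N₀ hqKle hN₀le
  have hexpK : η (q K') = Complex.exp (((η (q K')).arg : ℝ) * Complex.I) := by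
    conv_lhs => rw [← Complex.norm_mul_exp_arg_mul_I (η (q K'))]
    rw [habs]; simp
  rw [hteq, eta_pow η hmul p' (q K') h0t, hexpK, ← Complex.exp_nat_mul]
  congr 1
  push_cast
  have hargK' : ((K':ℂ)+1) * (((η (q K')).arg : ℝ) : ℂ)
      = ((N₀:ℂ)+1) * (((η (q N₀)).arg : ℝ) : ℂ) := by exact_mod_cast hargK
  have hK0 : ((K':ℂ)+1) ≠ 0 := by
    intro hcon
    have : ((K':ℝ)+1) ≠ 0 := by positivity
    exact this (by exact_mod_cast hcon)
  rw [hqK, hK']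
  push_cast
  field_simp
  linear_combination hargK'

end CharAux

/-- **Lemma 4.4.** Under Condition (3), if the function
`t ↦ ⟨β_{t,1-t} y₁, ξ_{1-t,t} β_{1-t,t} y₁⟩` (with value `‖y₁‖² = 1` at the endpoints) is
uniformly continuous on `ℚ ∩ [0,1]`, then `η_t = e^{ibt}` for some real `b`. -/
theorem statement17
    (E : Qpos → Type*) [∀ t, NormedAddCommGroup (E t)] [∀ t, InnerProductSpace ℂ (E t)]
    (hdim : ∀ t, Module.finrank ℂ (E t) = 2)
    (β : ∀ s t : Qpos, E (s + t) →ₗᵢ[ℂ] (E s ⊗[ℂ] E t))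
    (hassoc : SubprodAssocQ E β)
    (c : ℝ) (hc : 0 < c) (η : Qpos → ℂ)
    (x y : ∀ t : Qpos, E t) (h3 : Cond3With E β c η x y)
    (huc : UniformContinuousOn (flipInnerFn E β (y 1)) (Set.Icc (0 : ℚ) 1)) :
    ∃ b : ℝ, ∀ t : Qpos,
      η t = Complex.exp (Complex.I * (b : ℂ) * (((t : ℚ) : ℝ) : ℂ)) := by
  obtain ⟨habs, hmulη, hxnorm, hxy, hynorm, hβx, hβy⟩ := h3
  have hyx : ∀ t : Qpos, (inner ℂ (y t) (x t) : ℂ) = 0 := fun t => by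
    rw [← inner_conj_symm, hxy]; simp
  have hxx : ∀ t : Qpos, (inner ℂ (x t) (x t) : ℂ) = 1 := fun t => by
    rw [inner_self_eq_norm_sq_to_K, hxnorm]; norm_num
  have hyy : ∀ t : Qpos, (inner ℂ (y t) (y t) : ℂ) = ((‖y t‖ : ℂ))^2 := fun t =>
    inner_self_eq_norm_sq_to_K (y t)
  have key : ∀ (t : ℚ) (ht : 0 < t ∧ t < 1),
      flipInnerFn E β (y 1) t =
        ((c ^ ((t:ℝ)) : ℝ):ℂ) * η ⟨t, ht.1⟩ * ((‖y ⟨1-t, by linarith [ht.2]⟩‖ : ℂ))^2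
        + ((c ^ (((1-t : ℚ):ℝ)) : ℝ):ℂ) * (starRingEnd ℂ) (η ⟨1-t, by linarith [ht.2]⟩)
            * ((‖y ⟨t, ht.1⟩‖ : ℂ))^2 := by
    intro t ht
    rw [flipInnerFn, dif_pos ht]
    rw [castE_family E y, castE_family E y, hβy, hβy]
    simp only [map_add, LinearEquiv.map_smul, TensorProduct.comm_tmul,
      inner_add_left, inner_add_right, inner_smul_left, inner_smul_right, inner_tmul,
      tinner_add_left, tinner_add_right, tinner_smul_left, tinner_smul_right,
      hxy, hyx, hxx, hyy]
    push_cast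
    rw [map_mul, Complex.conj_ofReal]
    ring
  -- value at 0 and norm formula
  have hc2 : c ≠ 1 → c ^ 2 - 1 ≠ 0 := by
    intro h1 h0
    apply h1
    have h2 : (c - 1) * (c + 1) = 0 := by ring_nf; linarith
    rcases mul_eq_zero.mp h2 with h | h
    · linarith
    · linarith
  have hy1 : ‖y 1‖ ^ 2 = 1 := by
    rw [hynorm 1]
    have h1 : (((1 : Qpos) : ℚ) : ℝ) = 1 := by norm_num [Positive.val_one]
    by_cases hc1 : c = 1
    · rw [if_pos hc1, h1]
    · rw [if_neg hc1, h1, mul_one, show (2:ℝ) = ((2:ℕ):ℝ) by norm_num,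
        Real.rpow_natCast]
      exact div_self (hc2 hc1)
  have hf0 : flipInnerFn E β (y 1) 0 = 1 := by
    rw [flipInnerFn, dif_neg (by norm_num)]
    rw [← Complex.ofReal_pow, hy1]
    norm_num
  -- the auxiliary real functions
  set Nf : ℝ → ℝ := fun r => if c = 1 then r else (c ^ (2*r) - 1)/(c^2-1) with hNf
  have hNval : ∀ tq : Qpos, ‖y tq‖ ^ 2 = Nf ((tq : ℚ) : ℝ) := fun tq => hynorm tq
  set G : ℝ → ℂ := fun r => ((c ^ r * Nf (1-r) : ℝ) : ℂ)
      + ((c ^ (1-r) : ℝ) : ℂ) * (starRingEnd ℂ) (η 1) * ((Nf r : ℝ) : ℂ) with hG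
  -- continuity of G at 0 with value 1
  have hrpow : Continuous fun r : ℝ => c ^ r := by
    rw [continuous_iff_continuousAt]
    intro b
    exact Real.continuousAt_const_rpow (ne_of_gt hc)
  have hNcont : Continuous Nf := by
    by_cases hc1 : c = 1
    · simpa [hNf, hc1] using continuous_id'
    · have : Nf = fun r => (c ^ (2*r) - 1)/(c^2-1) := by
        funext r; rw [hNf]; simp [hc1]
      rw [this]
      exact ((hrpow.comp (continuous_const.mul continuous_id)).sub continuous_const).div_const _
  have hGcont : Continuous G := by
    apply Continuous.add
    · exact Complex.continuous_ofReal.comp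
        (hrpow.mul (hNcont.comp (continuous_const.sub continuous_id)))
    · exact ((Complex.continuous_ofReal.comp
        (hrpow.comp (continuous_const.sub continuous_id))).mul continuous_const).mul
        (Complex.continuous_ofReal.comp hNcont)
  have hG0 : G 0 = 1 := by
    have hN0 : Nf 0 = 0 := by
      by_cases hc1 : c = 1 <;> simp [hNf, hc1, Real.rpow_zero]
    have hN1 : Nf 1 = 1 := by
      have h1 : (((1 : Qpos) : ℚ) : ℝ) = 1 := by norm_num [Positive.val_one]
      conv_lhs => rw [← h1]
      rw [← hNval 1]
      exact hy1
    simp [hG, hN0, hN1, Real.rpow_zero]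
  -- relation between flipInnerFn and G
  have hrel : ∀ tq : Qpos, (tq : ℚ) < 1 →
      flipInnerFn E β (y 1) (tq : ℚ) = η tq * G (((tq : ℚ)) : ℝ) := by
    intro tq hlt
    have ht : 0 < (tq : ℚ) ∧ (tq : ℚ) < 1 := ⟨tq.2, hlt⟩
    rw [key _ ht]
    have hs : (⟨(tq : ℚ), ht.1⟩ : Qpos) = tq := rfl
    have hu0 : (0 : ℚ) < 1 - (tq : ℚ) := by linarith [ht.2]
    have hη1 : η 1 = η tq * η ⟨1 - (tq : ℚ), hu0⟩ := by
      rw [← hmulη]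
      congr 1
      ext
      show ((1 : Qpos) : ℚ) = (tq : ℚ) + (1 - (tq : ℚ))
      rw [Positive.val_one]; ring
    have hconj : (starRingEnd ℂ) (η ⟨1 - (tq : ℚ), hu0⟩)
        = η tq * (starRingEnd ℂ) (η 1) := by
      rw [hη1, map_mul, ← mul_assoc, Complex.mul_conj, Complex.normSq_eq_norm_sq, habs]
      norm_num
    rw [hs, show (⟨1 - (tq : ℚ), by linarith [ht.2]⟩ : Qpos) = ⟨1 - (tq : ℚ), hu0⟩ from rfl,
      ← Complex.ofReal_pow, ← Complex.ofReal_pow, hNval, hNval, hconj, hG]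
    push_cast
    ring
  -- the limit of G along rationals
  have hGt : Filter.Tendsto (fun qq : ℚ => G ((qq : ℚ) : ℝ)) (nhds 0) (nhds 1) := by
    have h1 : Filter.Tendsto (fun qq : ℚ => ((qq : ℚ) : ℝ)) (nhds 0) (nhds ((0:ℚ):ℝ)) :=
      (Rat.continuous_coe_real.tendsto 0)
    have h2 : Filter.Tendsto G (nhds ((0:ℚ):ℝ)) (nhds 1) := by
      have := hGcont.continuousAt (x := ((0:ℚ):ℝ))
      rw [ContinuousAt] at this
      simpa [hG0] using this
    exact h2.comp h1
  have h2 := Metric.tendsto_nhds.mp hGt (1/4) (by norm_num)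
  rw [Metric.eventually_nhds_iff] at h2
  obtain ⟨δ₂, hδ₂pos, hδ₂⟩ := h2
  rw [Metric.uniformContinuousOn_iff] at huc
  obtain ⟨δ₁, hδ₁pos, hδ₁⟩ := huc (1/4) (by norm_num)
  obtain ⟨δ, hδ0, hδlt⟩ := exists_rat_btwn (show (0:ℝ) < min (min δ₁ δ₂) 1 by
    apply lt_min (lt_min hδ₁pos hδ₂pos); norm_num)
  have hδQ : (0 : ℚ) < δ := by exact_mod_cast hδ0
  have hδlt1 : (δ : ℝ) < 1 := lt_of_lt_of_le hδlt (min_le_right _ _)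
  have hδltδ₁ : (δ : ℝ) < δ₁ :=
    lt_of_lt_of_le hδlt (le_trans (min_le_left _ _) (min_le_left _ _))
  have hδltδ₂ : (δ : ℝ) < δ₂ :=
    lt_of_lt_of_le hδlt (le_trans (min_le_left _ _) (min_le_right _ _))
  apply char_exp η habs hmulη δ hδQ
  intro tq htle
  have htlt1 : (tq : ℚ) < 1 := by
    have : (δ : ℚ) < 1 := by exact_mod_cast hδlt1
    linarith
  have hdistr : dist (tq : ℚ) (0 : ℚ) = ((tq : ℚ) : ℝ) := by
    rw [Rat.dist_eq]
    push_cast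
    rw [sub_zero, abs_of_pos (by exact_mod_cast tq.2)]
  have htler : ((tq : ℚ) : ℝ) ≤ (δ : ℝ) := by exact_mod_cast htle
  have hmem : (tq : ℚ) ∈ Set.Icc (0 : ℚ) 1 := ⟨le_of_lt tq.2, le_of_lt htlt1⟩
  have h0mem : (0 : ℚ) ∈ Set.Icc (0 : ℚ) 1 := by constructor <;> norm_num
  have hf := hδ₁ _ hmem _ h0mem (by rw [hdistr]; linarith)
  rw [hf0] at hf
  have hfabs : ‖flipInnerFn E β (y 1) (tq : ℚ) - 1‖ < 1/4 := by
    rw [← Complex.dist_eq]; exact hf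
  have hGabs : ‖G (((tq : ℚ)) : ℝ) - 1‖ < 1/4 := by
    have := hδ₂ (y := (tq : ℚ)) (by rw [hdistr]; linarith)
    rw [← Complex.dist_eq]; exact this
  rw [hrel tq htlt1] at hfabs
  calc ‖η tq - 1‖
      = ‖(η tq * G (((tq : ℚ)) : ℝ) - 1) + (-(η tq * (G (((tq : ℚ)) : ℝ) - 1)))‖ := by
        congr 1; ring
    _ ≤ ‖η tq * G (((tq : ℚ)) : ℝ) - 1‖
        + ‖-(η tq * (G (((tq : ℚ)) : ℝ) - 1))‖ := norm_add_le _ _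
    _ = ‖η tq * G (((tq : ℚ)) : ℝ) - 1‖
        + ‖G (((tq : ℚ)) : ℝ) - 1‖ := by
        rw [norm_neg, norm_mul, habs, one_mul]
    _ < 1/4 + 1/4 := by exact add_lt_add hfabs hGabs
    _ < 1 := by norm_num


end SubprodHilbert
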